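/- In a population protocol with a designated output state y: instability is closed upwards and stability is closed downwards. That is, for configurations c, c' ∈ ℕ^Λ with c ≤ c', if c is not stable then c' is not stable; equivalently, if o is stable and o' ≤ o, then o' is stable. -/
import Mathlib


/-! Basic definitions for (leaderless) population protocols:
configurations, transitions, paths, reachability, bottlenecks, stability. -/

namespace PP

variable {Λ : Type*}

open Classical in
/-- The configuration consisting of a single agent in state `s`. -/
noncomputable def single (s : Λ) : Λ → ℕ := fun t => if t = s then 1 else 0

/-- The configuration consisting of the two agents of the ordered pair `r`. -/
noncomputable def pairConf (r : Λ × Λ) : Λ → ℕ := single r.1 + single r.2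

/-- The transition with input pair `r` is applicable to configuration `c`. -/
def Applicable (c : Λ → ℕ) (r : Λ × Λ) : Prop := pairConf r ≤ c

/-- The result of applying the transition with inputs `r` (and outputs `δ r`) to `c`. -/
noncomputable def applyTx (δ : Λ × Λ → Λ × Λ) (r : Λ × Λ) (c : Λ → ℕ) : Λ → ℕ :=
  c - pairConf r + pairConf (δ r)

/-- `PathFrom δ c p c'`: executing the transition sequence `p` (each transition given
by its ordered pair of input states) from `c` is valid and ends in `c'`. -/
inductive PathFrom (δ : Λ × Λ → Λ × Λ) : (Λ → ℕ) → List (Λ × Λ) → (Λ → ℕ) → Prop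
  | nil (c : Λ → ℕ) : PathFrom δ c [] c
  | cons {c c' : Λ → ℕ} (r : Λ × Λ) {p : List (Λ × Λ)} :
      Applicable c r → PathFrom δ (applyTx δ r c) p c' → PathFrom δ c (r :: p) c'

/-- `Reach δ c c'` means `c ⟹ c'`: some finite path leads from `c` to `c'`. -/
def Reach (δ : Λ × Λ → Λ × Λ) (c c' : Λ → ℕ) : Prop := ∃ p, PathFrom δ c p c'

/-- `NoBottleneck δ b c p`: no transition of path `p` executed from `c` is a
`b`-bottleneck for the configuration to which it is applied. -/
inductive NoBottleneck (δ : Λ × Λ → Λ × Λ) (b : ℕ) : (Λ → ℕ) → List (Λ × Λ) → Prop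
  | nil (c : Λ → ℕ) : NoBottleneck δ b c []
  | cons {c : Λ → ℕ} (r : Λ × Λ) {p : List (Λ × Λ)} :
      ¬(c r.1 ≤ b ∧ c r.2 ≤ b) → NoBottleneck δ b (applyTx δ r c) p →
      NoBottleneck δ b c (r :: p)

/-- A configuration is stable w.r.t. output state `y` if the count of `y` can never
change again. -/
def Stable (δ : Λ × Λ → Λ × Λ) (y : Λ) (o : Λ → ℕ) : Prop :=
  ∀ o', Reach δ o o' → o' y = o y

/-- The transition function is symmetric. -/
def Symmetric (δ : Λ × Λ → Λ × Λ) : Prop :=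
  ∀ r1 r2 : Λ, δ (r2, r1) = ((δ (r1, r2)).2, (δ (r1, r2)).1)

end PP

/-- Instability is closed upwards and stability is closed downwards: for
configurations `c ≤ c'`, if `c` is not stable then `c'` is not stable;
equivalently, if `c'` is stable then so is `c`. -/
lemma PP.path_add {Λ : Type*} (δ : Λ × Λ → Λ × Λ) {c o : Λ → ℕ} {p : List (Λ × Λ)}
    (hp : PP.PathFrom δ c p o) (d : Λ → ℕ) : PP.PathFrom δ (c + d) p (o + d) := by
  induction hp with
  | nil c => exact PP.PathFrom.nil _
  | @cons a a' r q happ _ ih =>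
    refine PP.PathFrom.cons r ?_ ?_
    · intro t; have h1 : PP.pairConf r t ≤ a t := happ t; simp only [Pi.add_apply] at *; omega
    · have heq : PP.applyTx δ r (a + d) = PP.applyTx δ r a + d := by
        funext t
        have h1 : PP.pairConf r t ≤ a t := happ t
        simp only [PP.applyTx, Pi.add_apply, Pi.sub_apply] at *
        omega
      rwa [heq]

theorem stmt4 {Λ : Type*} (δ : Λ × Λ → Λ × Λ) (y : Λ)
    (c c' : Λ → ℕ) (h : c ≤ c') :
    (¬ PP.Stable δ y c → ¬ PP.Stable δ y c') ∧
    (PP.Stable δ y c' → PP.Stable δ y c) := by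
  have key : PP.Stable δ y c' → PP.Stable δ y c := by
    intro hs o ⟨p, hp⟩
    set d : Λ → ℕ := fun t => c' t - c t with hd
    have hcd : c + d = c' := by
      funext t; have ht : c t ≤ c' t := h t; simp only [Pi.add_apply, hd]; omega
    have hpath := PP.path_add δ hp d
    rw [hcd] at hpath
    have heq := hs (o + d) ⟨p, hpath⟩
    simp only [Pi.add_apply] at heq
    have hy : c y ≤ c' y := h y
    simp only [hd] at heq
    omega
  exact ⟨fun hn hs => hn (key hs), key⟩
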